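/- Let β ∈ (0, 0.1] and let K^u_β be the cone { c₁(1,−β) + c₂(1,1+2β) : c₁c₂ ≥ 0 } ⊂ ℝ². Set μ̄_β := √((1−β)² + 1)/√(β² + 1). Then μ̄_β > 1, and for every natural number a ≥ 1 and every v ∈ K^u_β, one has μ̄_β·|v| ≤ |A_a v| ≤ μ^u(a)·|v|, where A_a = [[a,1],[1,0]] and μ^u(a) = (a + √(4+a²))/2. -/
import Mathlib


/-- The cone `K^u_β = { c₁(1,−β) + c₂(1,1+2β) : c₁c₂ ≥ 0 } ⊂ ℝ²`. -/
def Ku (β : ℝ) : Set (Fin 2 → ℝ) :=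
  {v | ∃ c₁ c₂ : ℝ, c₁ * c₂ ≥ 0 ∧ v = c₁ • ![1, -β] + c₂ • ![1, 1 + 2 * β]}

/-- The Euclidean norm on `ℝ²`. -/
noncomputable def enorm2 (v : Fin 2 → ℝ) : ℝ := Real.sqrt (v 0 ^ 2 + v 1 ^ 2)

lemma upperaux (a s x y : ℝ) (ha : 1 ≤ a) (hs2 : s^2 = 4+a^2) (hsa : a < s) :
    (a*x+y)^2+x^2 ≤ ((a+s)/2)^2*(x^2+y^2) := by
  have key : 0 ≤ a * ((s-a)*x - 2*y)^2 := mul_nonneg (by linarith) (sq_nonneg _)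
  have h5 : (s-a) * ((2*a^2+4+2*a*s)*(x^2+y^2) - 4*(a*x+y)^2 - 4*x^2)
      = 2*(a * ((s-a)*x - 2*y)^2) := by linear_combination 2*a*y^2 * hs2
  have hB : 0 ≤ (2*a^2+4+2*a*s)*(x^2+y^2) - 4*(a*x+y)^2 - 4*x^2 := by
    nlinarith [key, h5, sub_pos.2 hsa]
  have e : ((a+s)/2)^2*(x^2+y^2) = (2*a^2+4+2*a*s)/4*(x^2+y^2) := by
    linear_combination (x^2+y^2)/4 * hs2
  linarith

lemma loweraux (β a c₁ c₂ : ℝ) (hb0 : 0 < β) (hb1 : β ≤ 1/10) (ha : 1 ≤ a)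
    (hc : 0 ≤ c₁ * c₂) :
    ((1-β)^2+1)*((c₁+c₂)^2+(-β*c₁+(1+2*β)*c₂)^2) ≤
      (β^2+1)*((a*(c₁+c₂)+(-β*c₁+(1+2*β)*c₂))^2+(c₁+c₂)^2) := by
  have h1 : 0 ≤ (c₁+c₂)^2 + (c₁+c₂)*(-β*c₁+(1+2*β)*c₂) := by
    nlinarith [sq_nonneg c₁, sq_nonneg c₂]
  have h2 : 0 ≤ (a-1) * ((c₁+c₂)^2 + (c₁+c₂)*(-β*c₁+(1+2*β)*c₂)) :=
    mul_nonneg (by linarith) h1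
  nlinarith [sq_nonneg ((a-1)*(c₁+c₂)), sq_nonneg c₂, h2,
    mul_nonneg (mul_nonneg hc hb0.le) hb0.le, mul_nonneg hc hb0.le, hc,
    mul_nonneg (mul_nonneg (sq_nonneg c₂) hb0.le) hb0.le,
    mul_nonneg (sq_nonneg c₂) hb0.le,
    mul_nonneg (mul_nonneg h2 hb0.le) hb0.le]

/-- With `μ̄_β := √((1−β)²+1)/√(β²+1)`, one has `μ̄_β > 1`, and for every
`a ≥ 1` and `v ∈ K^u_β`: `μ̄_β·|v| ≤ |A_a v| ≤ μᵘ(a)·|v|` where `μᵘ(a) = (a+√(4+a²))/2`. -/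
theorem stmt3 (β : ℝ) (hβ : β ∈ Set.Ioc (0 : ℝ) 0.1) :
    1 < Real.sqrt ((1 - β) ^ 2 + 1) / Real.sqrt (β ^ 2 + 1) ∧
    ∀ a : ℕ, 1 ≤ a → ∀ v ∈ Ku β,
      Real.sqrt ((1 - β) ^ 2 + 1) / Real.sqrt (β ^ 2 + 1) * enorm2 v ≤
        enorm2 ((!![(a : ℝ), 1; 1, 0]).mulVec v) ∧
      enorm2 ((!![(a : ℝ), 1; 1, 0]).mulVec v) ≤
        (((a : ℝ) + Real.sqrt (4 + (a : ℝ) ^ 2)) / 2) * enorm2 v := by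
  obtain ⟨hβ0, hβ1⟩ := hβ
  norm_num at hβ1
  have hB : (0:ℝ) < β ^ 2 + 1 := by positivity
  have hA : (0:ℝ) ≤ (1 - β) ^ 2 + 1 := by positivity
  have hsB : 0 < Real.sqrt (β ^ 2 + 1) := Real.sqrt_pos.2 hB
  constructor
  · rw [lt_div_iff₀ hsB, one_mul]
    exact Real.sqrt_lt_sqrt hB.le (by nlinarith)
  · intro a ha v hv
    obtain ⟨c₁, c₂, hc, rfl⟩ := hv
    have ha' : (1:ℝ) ≤ (a:ℝ) := by exact_mod_cast ha
    have hv0 : (c₁ • ![1, -β] + c₂ • ![(1:ℝ), 1 + 2 * β]) 0 = c₁ + c₂ := by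
      simp
    have hv1 : (c₁ • ![1, -β] + c₂ • ![(1:ℝ), 1 + 2 * β]) 1 = -β*c₁ + (1+2*β)*c₂ := by
      simp; ring
    have hw : (!![(a : ℝ), 1; 1, 0]).mulVec (c₁ • ![1, -β] + c₂ • ![(1:ℝ), 1 + 2 * β])
        = ![(a:ℝ) * (c₁+c₂) + (-β*c₁ + (1+2*β)*c₂), c₁+c₂] := by
      funext i
      fin_cases i <;>
        simp [Matrix.mulVec, dotProduct, Fin.sum_univ_two, hv0, hv1] <;> ring
    set x : ℝ := c₁ + c₂
    set y : ℝ := -β*c₁ + (1+2*β)*c₂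
    have henv : enorm2 (c₁ • ![1, -β] + c₂ • ![(1:ℝ), 1 + 2 * β]) = Real.sqrt (x^2 + y^2) := by
      rw [enorm2, hv0, hv1]
    rw [hw, henv]
    have henw : enorm2 ![(a:ℝ) * x + y, x] = Real.sqrt (((a:ℝ)*x + y)^2 + x^2) := by
      simp [enorm2]
    rw [henw]
    constructor
    · have key : ((1 - β) ^ 2 + 1) * (x^2 + y^2) ≤ (β ^ 2 + 1) * (((a:ℝ)*x + y)^2 + x^2) :=
        loweraux β (a:ℝ) c₁ c₂ hβ0 hβ1 ha' hc
      calc Real.sqrt ((1 - β) ^ 2 + 1) / Real.sqrt (β ^ 2 + 1) * Real.sqrt (x^2+y^2)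
          = Real.sqrt (((1 - β) ^ 2 + 1) / (β ^ 2 + 1) * (x^2+y^2)) := by
            rw [Real.sqrt_mul (by positivity), Real.sqrt_div hA]
        _ ≤ Real.sqrt (((a:ℝ)*x + y)^2 + x^2) := by
            apply Real.sqrt_le_sqrt
            rw [div_mul_eq_mul_div, div_le_iff₀ hB]
            linarith
    · set s : ℝ := Real.sqrt (4 + (a:ℝ)^2) with hsdef
      have hs2 : s^2 = 4 + (a:ℝ)^2 := Real.sq_sqrt (by positivity)
      have hsa : (a:ℝ) < s := by
        nlinarith [Real.sqrt_nonneg (4 + (a:ℝ)^2)]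
      have hμ : 0 ≤ ((a:ℝ) + s) / 2 := by positivity
      calc Real.sqrt (((a:ℝ)*x + y)^2 + x^2)
          ≤ Real.sqrt ((((a:ℝ) + s)/2)^2 * (x^2+y^2)) :=
            Real.sqrt_le_sqrt (upperaux (a:ℝ) s x y ha' hs2 hsa)
        _ = ((a:ℝ) + s)/2 * Real.sqrt (x^2+y^2) := by
            rw [Real.sqrt_mul (sq_nonneg _), Real.sqrt_sq hμ]
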